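/- Let (k_n)_{n≥1} be a sequence of positive integers. Suppose that for every nonincreasing sequence (d_i)_{i≥1} of strictly positive real numbers converging to zero, the diagonal operator diag(d) can be written as diag(d) = C∘Z − Z∘C where C is a compact operator, Z is a bounded operator, and at least one of C, Z is block tridiagonal with central block sizes k_n. Then there exist ρ > 1 and c > 0 such that k_n ≥ c·ρ^n for all n ≥ 1. -/

import Mathlib

open Filter

variable {H : Type*} [NormedAddCommGroup H] [InnerProductSpace ℂ H] [CompleteSpace H]

/-- Partial sums `s n = k 1 + ⋯ + k n` of a sequence of block sizes (with `s 0 = 0`). -/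
def psum (k : ℕ → ℕ) (n : ℕ) : ℕ := ∑ j ∈ Finset.Icc 1 n, k j

/-- The block index `b i` of an index `i ≥ 1`: the unique `n` with `s (n-1) < i ≤ s n`
(realized as the least `n` with `i ≤ s n`). -/
noncomputable def blockIdx (k : ℕ → ℕ) (i : ℕ) : ℕ := sInf {n | i ≤ psum k n}

/-- A bounded operator `W` is block tridiagonal with central block sizes `k n` if
`⟪e i, W (e j)⟫ = 0` whenever `|b i - b j| ≥ 2`. -/
def IsBlockTridiagonal (e : HilbertBasis ℕ+ ℂ H) (k : ℕ → ℕ) (W : H →L[ℂ] H) : Prop :=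
  ∀ i j : ℕ+, 2 ≤ |(blockIdx k (i : ℕ) : ℤ) - (blockIdx k (j : ℕ) : ℤ)| →
    (inner ℂ (e i) (W (e j)) : ℂ) = 0

/-- The orthogonal projection `P n` onto `span {e i : s (n-1) < i ≤ s n}`. -/
noncomputable def blockProj (e : HilbertBasis ℕ+ ℂ H) (k : ℕ → ℕ) (n : ℕ) : H →L[ℂ] H :=
  ∑ i ∈ (Finset.Ioc (psum k (n - 1)) (psum k n)).attach,
    (innerSL ℂ (e ⟨i.1, Nat.lt_of_le_of_lt (Nat.zero_le _) (Finset.mem_Ioc.mp i.2).1⟩)).smulRight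
      (e ⟨i.1, Nat.lt_of_le_of_lt (Nat.zero_le _) (Finset.mem_Ioc.mp i.2).1⟩)

/-- The partial trace `∑_{j=1}^m ⟪e j, T (e j)⟫`. -/
noncomputable def ptrace (e : HilbertBasis ℕ+ ℂ H) (T : H →L[ℂ] H) (m : ℕ) : ℂ :=
  ∑ i ∈ (Finset.Icc 1 m).attach,
    (inner ℂ (e ⟨i.1, (Finset.mem_Icc.mp i.2).1⟩) (T (e ⟨i.1, (Finset.mem_Icc.mp i.2).1⟩)) : ℂ)

/-- The upper off-diagonal block `A n (W) = P n ∘ W ∘ P (n+1)`. -/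
noncomputable def blockA (e : HilbertBasis ℕ+ ℂ H) (k : ℕ → ℕ) (n : ℕ) (W : H →L[ℂ] H) :
    H →L[ℂ] H :=
  blockProj e k n ∘L W ∘L blockProj e k (n + 1)

/-- The lower off-diagonal block `B n (W) = P (n+1) ∘ W ∘ P n`. -/
noncomputable def blockB (e : HilbertBasis ℕ+ ℂ H) (k : ℕ → ℕ) (n : ℕ) (W : H →L[ℂ] H) :
    H →L[ℂ] H :=
  blockProj e k (n + 1) ∘L W ∘L blockProj e k n


set_option maxHeartbeats 1000000
set_option linter.unusedSectionVars false

section AuxLemmas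

lemma psum_mono (k : ℕ → ℕ) : Monotone (psum k) := fun _ _ hab =>
  Finset.sum_le_sum_of_subset (Finset.Icc_subset_Icc_right hab)

lemma le_psum (k : ℕ → ℕ) (hk : ∀ n, 1 ≤ n → 1 ≤ k n) (n : ℕ) : n ≤ psum k n := by
  calc n = ∑ _j ∈ Finset.Icc 1 n, 1 := by simp
  _ ≤ psum k n := Finset.sum_le_sum fun j hj => hk j (Finset.mem_Icc.mp hj).1

lemma psum_succ (k : ℕ → ℕ) (n : ℕ) : psum k (n+1) = psum k n + k (n+1) := by
  unfold psum
  rw [← Finset.sum_Icc_succ_top (Nat.le_add_left 1 n)]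

lemma blockIdx_le_iff (k : ℕ → ℕ) (hk : ∀ n, 1 ≤ n → 1 ≤ k n) (i n : ℕ) :
    blockIdx k i ≤ n ↔ i ≤ psum k n := by
  constructor
  · intro hle
    have hne : {m | i ≤ psum k m}.Nonempty := ⟨i, le_psum k hk i⟩
    have hmem : i ≤ psum k (sInf {m | i ≤ psum k m}) := Nat.sInf_mem hne
    exact le_trans (show i ≤ psum k (blockIdx k i) from hmem) (psum_mono k hle)
  · intro h
    exact Nat.sInf_le h

lemma blockIdx_mono (k : ℕ → ℕ) (hk : ∀ n, 1 ≤ n → 1 ≤ k n) : Monotone (blockIdx k) :=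
  fun i i' hii' => (blockIdx_le_iff k hk i _).mpr
    (hii'.trans ((blockIdx_le_iff k hk i' _).mp le_rfl))

lemma lt_blockIdx (k : ℕ → ℕ) (hk : ∀ n, 1 ≤ n → 1 ≤ k n) {i n : ℕ} (h : psum k n < i) :
    n < blockIdx k i := by
  by_contra hc
  push_neg at hc
  exact absurd ((blockIdx_le_iff k hk i n).mp hc) (by omega)

lemma blockIdx_tendsto (k : ℕ → ℕ) (hk : ∀ n, 1 ≤ n → 1 ≤ k n) :
    Tendsto (blockIdx k) atTop atTop := by
  apply tendsto_atTop_atTop.mpr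
  intro b
  exact ⟨psum k b + 1, fun i hi => (lt_blockIdx k hk (by omega)).le⟩


lemma inner_comp_eq_tsum (e : HilbertBasis ℕ+ ℂ H) (W V : H →L[ℂ] H) (x y : H) :
    (inner ℂ x ((W ∘L V) y) : ℂ) = ∑' m : ℕ+, (inner ℂ x (W (e m)) : ℂ) * inner ℂ (e m) (V y) := by
  have h := e.tsum_inner_mul_inner (ContinuousLinearMap.adjoint W x) (V y)
  simp_rw [ContinuousLinearMap.adjoint_inner_left] at h
  rw [ContinuousLinearMap.comp_apply]
  exact h.symm

lemma norm_sum_entry_mul_le (e : HilbertBasis ℕ+ ℂ H) (W V : H →L[ℂ] H) (i : ℕ+)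
    (F : Finset ℕ+) :
    ‖∑ j ∈ F, (inner ℂ (e i) (W (e j)) : ℂ) * inner ℂ (e j) (V (e i))‖ ≤ ‖W‖ * ‖V‖ := by
  have hWnorm : ‖ContinuousLinearMap.adjoint W‖ = ‖W‖ :=
    (ContinuousLinearMap.adjoint : (H →L[ℂ] H) ≃ₗᵢ⋆[ℂ] (H →L[ℂ] H)).norm_map W
  have he : ∀ m : ℕ+, ‖e m‖ = 1 := fun m => e.orthonormal.1 m
  have hW : ∑ j ∈ F, ‖(inner ℂ (e i) (W (e j)) : ℂ)‖ ^ 2 ≤ ‖W‖ ^ 2 := by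
    have : ∀ j : ℕ+, ‖(inner ℂ (e i) (W (e j)) : ℂ)‖
        = ‖(inner ℂ (e j) ((ContinuousLinearMap.adjoint W) (e i)) : ℂ)‖ := by
      intro j
      rw [← ContinuousLinearMap.adjoint_inner_left, norm_inner_symm]
    simp_rw [this]
    calc ∑ j ∈ F, ‖(inner ℂ (e j) ((ContinuousLinearMap.adjoint W) (e i)) : ℂ)‖ ^ 2
        ≤ ‖(ContinuousLinearMap.adjoint W) (e i)‖ ^ 2 :=
          e.orthonormal.sum_inner_products_le _
      _ ≤ ‖W‖ ^ 2 := by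
          have := (ContinuousLinearMap.adjoint W).le_opNorm (e i)
          rw [he i, mul_one, hWnorm] at this
          exact pow_le_pow_left₀ (norm_nonneg _) this 2
  have hV : ∑ j ∈ F, ‖(inner ℂ (e j) (V (e i)) : ℂ)‖ ^ 2 ≤ ‖V‖ ^ 2 := by
    calc ∑ j ∈ F, ‖(inner ℂ (e j) (V (e i)) : ℂ)‖ ^ 2
        ≤ ‖V (e i)‖ ^ 2 := e.orthonormal.sum_inner_products_le _
      _ ≤ ‖V‖ ^ 2 := by
          have := V.le_opNorm (e i)
          rw [he i, mul_one] at this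
          exact pow_le_pow_left₀ (norm_nonneg _) this 2
  calc ‖∑ j ∈ F, (inner ℂ (e i) (W (e j)) : ℂ) * inner ℂ (e j) (V (e i))‖
      ≤ ∑ j ∈ F, ‖(inner ℂ (e i) (W (e j)) : ℂ) * inner ℂ (e j) (V (e i))‖ := norm_sum_le _ _
    _ = ∑ j ∈ F, ‖(inner ℂ (e i) (W (e j)) : ℂ)‖ * ‖(inner ℂ (e j) (V (e i)) : ℂ)‖ := by
        simp [norm_mul]
    _ ≤ Real.sqrt (∑ j ∈ F, ‖(inner ℂ (e i) (W (e j)) : ℂ)‖ ^ 2)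
        * Real.sqrt (∑ j ∈ F, ‖(inner ℂ (e j) (V (e i)) : ℂ)‖ ^ 2) :=
        Real.sum_mul_le_sqrt_mul_sqrt _ _ _
    _ ≤ Real.sqrt (‖W‖ ^ 2) * Real.sqrt (‖V‖ ^ 2) := by
        gcongr
    _ = ‖W‖ * ‖V‖ := by
        rw [Real.sqrt_sq (norm_nonneg _), Real.sqrt_sq (norm_nonneg _)]

lemma ptrace_eq_sum (e : HilbertBasis ℕ+ ℂ H) (T : H →L[ℂ] H) (m : ℕ+) :
    ptrace e T (m : ℕ) = ∑ i ∈ Finset.Icc 1 m, (inner ℂ (e i) (T (e i)) : ℂ) := by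
  unfold ptrace
  refine Finset.sum_bij (fun x _ => (⟨x.1, (Finset.mem_Icc.mp x.2).1⟩ : ℕ+)) ?_ ?_ ?_ ?_
  · rintro ⟨a, ha⟩ -
    have := Finset.mem_Icc.mp ha
    refine Finset.mem_Icc.mpr ?_
    exact ⟨PNat.one_le _, (PNat.coe_le_coe _ _).mp this.2⟩
  · intro a _ b _ hab
    exact Subtype.ext (congrArg (fun x : ℕ+ => (x : ℕ)) hab)
  · intro b hb
    have hb' := Finset.mem_Icc.mp hb
    have hmem : (b : ℕ) ∈ Finset.Icc 1 (m : ℕ) := by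
      rw [Finset.mem_Icc]
      exact ⟨b.one_le, (PNat.coe_le_coe _ _).mpr hb'.2⟩
    exact ⟨⟨(b : ℕ), hmem⟩, Finset.mem_attach _ _, PNat.coe_injective rfl⟩
  · intro a _
    rfl

lemma ptrace_comm_bound (e : HilbertBasis ℕ+ ℂ H) (k : ℕ → ℕ) (hk : ∀ n, 1 ≤ n → 1 ≤ k n)
    (W V : H →L[ℂ] H) (hW : IsBlockTridiagonal e k W) {n : ℕ} (hn : 1 ≤ n) :
    ‖ptrace e (W ∘L V - V ∘L W) (psum k n)‖ ≤ 2 * (k n : ℝ) * (‖W‖ * ‖V‖) := by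
  classical
  obtain ⟨p, rfl⟩ : ∃ p, n = p + 1 := ⟨n - 1, by omega⟩
  have hm1 : 0 < psum k (p+1) := lt_of_lt_of_le (by omega) (le_psum k hk (p+1))
  have hm2 : 0 < psum k (p+2) := lt_of_lt_of_le (by omega) (le_psum k hk (p+2))
  set m₁ : ℕ+ := ⟨psum k (p+1), hm1⟩ with hm₁def
  set m₂ : ℕ+ := ⟨psum k (p+2), hm2⟩ with hm₂def
  have hmle : m₁ ≤ m₂ := by
    rw [← PNat.coe_le_coe]
    exact psum_mono k (by omega)
  set I : Finset ℕ+ := Finset.Icc 1 m₁ with hIdef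
  set J : Finset ℕ+ := Finset.Icc 1 m₂ with hJdef
  have hIJ : I ⊆ J := Finset.Icc_subset_Icc_right hmle
  set w : ℕ+ → ℕ+ → ℂ := fun i j => (inner ℂ (e i) (W (e j)) : ℂ) with hwdef
  set v : ℕ+ → ℕ+ → ℂ := fun i j => (inner ℂ (e i) (V (e j)) : ℂ) with hvdef
  -- block index facts
  have hbI : ∀ i ∈ I, blockIdx k (i:ℕ) ≤ p+1 := by
    intro i hi
    have := (Finset.mem_Icc.mp hi).2
    exact (blockIdx_le_iff k hk _ _).mpr ((PNat.coe_le_coe _ _).mpr this)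
  have hbJc : ∀ j : ℕ+, j ∉ J → p + 2 < blockIdx k (j:ℕ) := by
    intro j hj
    have h1 : ¬ (j ≤ m₂) := by
      intro hle
      exact hj (Finset.mem_Icc.mpr ⟨PNat.one_le _, hle⟩)
    have h2 : psum k (p+2) < (j : ℕ) := by
      rw [not_le] at h1
      exact_mod_cast (PNat.coe_lt_coe _ _).mpr h1
    exact lt_blockIdx k hk h2
  -- step 1+2 : ptrace as double finite sum
  have h1 : ∀ i ∈ I, (inner ℂ (e i) ((W ∘L V) (e i)) : ℂ) = ∑ j ∈ J, w i j * v j i := by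
    intro i hi
    rw [inner_comp_eq_tsum e]
    refine tsum_eq_sum ?_
    intro j hj
    have hz : w i j = 0 := by
      refine hW i j ?_
      have hA := hbI i hi
      have hB := hbJc j hj
      have : (2:ℤ) ≤ (blockIdx k (j:ℕ) : ℤ) - (blockIdx k (i:ℕ) : ℤ) := by
        omega
      rw [abs_sub_comm]
      calc (2:ℤ) ≤ _ := this
      _ ≤ |(blockIdx k (j:ℕ) : ℤ) - (blockIdx k (i:ℕ) : ℤ)| := le_abs_self _
    rw [show (inner ℂ (e i) (W (e j)) : ℂ) = w i j from rfl, hz, zero_mul]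
  have h2 : ∀ i ∈ I, (inner ℂ (e i) ((V ∘L W) (e i)) : ℂ) = ∑ j ∈ J, v i j * w j i := by
    intro i hi
    rw [inner_comp_eq_tsum e]
    refine tsum_eq_sum ?_
    intro j hj
    have hz : w j i = 0 := by
      refine hW j i ?_
      have hA := hbI i hi
      have hB := hbJc j hj
      have : (2:ℤ) ≤ (blockIdx k (j:ℕ) : ℤ) - (blockIdx k (i:ℕ) : ℤ) := by omega
      calc (2:ℤ) ≤ _ := this
      _ ≤ |(blockIdx k (j:ℕ) : ℤ) - (blockIdx k (i:ℕ) : ℤ)| := le_abs_self _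
    rw [show (inner ℂ (e j) (W (e i)) : ℂ) = w j i from rfl, hz, mul_zero]
  have h0 : ptrace e (W ∘L V - V ∘L W) (psum k (p+1))
      = ∑ i ∈ I, ∑ j ∈ J, (w i j * v j i - v i j * w j i) := by
    rw [show psum k (p+1) = ((m₁ : ℕ+) : ℕ) from rfl, ptrace_eq_sum]
    refine Finset.sum_congr rfl fun i hi => ?_
    rw [ContinuousLinearMap.sub_apply, inner_sub_right, h1 i hi, h2 i hi,
      Finset.sum_sub_distrib]
  -- cancellation of the I × I part
  have hswap : ∑ i ∈ I, ∑ j ∈ I, v i j * w j i = ∑ i ∈ I, ∑ j ∈ I, w i j * v j i := by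
    rw [Finset.sum_comm]
    exact Finset.sum_congr rfl fun i _ => Finset.sum_congr rfl fun j _ => mul_comm _ _
  have hcancel : ∑ i ∈ I, ∑ j ∈ I, (w i j * v j i - v i j * w j i) = 0 := by
    simp only [Finset.sum_sub_distrib]
    rw [hswap]
    exact sub_self _
  have h3 : ptrace e (W ∘L V - V ∘L W) (psum k (p+1))
      = ∑ i ∈ I, ∑ j ∈ J \ I, (w i j * v j i - v i j * w j i) := by
    rw [h0]
    have : ∀ i ∈ I, ∑ j ∈ J, (w i j * v j i - v i j * w j i)
        = ∑ j ∈ J \ I, (w i j * v j i - v i j * w j i)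
          + ∑ j ∈ I, (w i j * v j i - v i j * w j i) :=
      fun i _ => (Finset.sum_sdiff hIJ).symm
    rw [Finset.sum_congr rfl this, Finset.sum_add_distrib, hcancel, add_zero]
  -- vanishing for small i
  set t : ℕ+ → ℂ := fun i => ∑ j ∈ J \ I, (w i j * v j i - v i j * w j i) with htdef
  have h4 : ∀ i ∈ I, (i:ℕ) ≤ psum k p → t i = 0 := by
    intro i _ hip
    refine Finset.sum_eq_zero fun j hj => ?_
    obtain ⟨hjJ, hjI⟩ := Finset.mem_sdiff.mp hj
    have hbj_le : blockIdx k (j:ℕ) ≤ p + 2 := by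
      have := (Finset.mem_Icc.mp hjJ).2
      exact (blockIdx_le_iff k hk _ _).mpr ((PNat.coe_le_coe _ _).mpr this)
    have hbj_gt : p + 1 < blockIdx k (j:ℕ) := by
      have h1' : ¬ (j ≤ m₁) := fun hle => hjI (Finset.mem_Icc.mpr ⟨PNat.one_le _, hle⟩)
      rw [not_le] at h1'
      exact lt_blockIdx k hk (by exact_mod_cast (PNat.coe_lt_coe _ _).mpr h1')
    have hbi : blockIdx k (i:ℕ) ≤ p := (blockIdx_le_iff k hk _ _).mpr hip
    have habs : 2 ≤ |(blockIdx k (i:ℕ) : ℤ) - (blockIdx k (j:ℕ) : ℤ)| := by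
      have : (2:ℤ) ≤ (blockIdx k (j:ℕ) : ℤ) - (blockIdx k (i:ℕ) : ℤ) := by omega
      rw [abs_sub_comm]
      calc (2:ℤ) ≤ _ := this
      _ ≤ _ := le_abs_self _
    have habs' : 2 ≤ |(blockIdx k (j:ℕ) : ℤ) - (blockIdx k (i:ℕ) : ℤ)| := by
      rwa [abs_sub_comm] at habs
    have hz1 : w i j = 0 := hW i j habs
    have hz2 : w j i = 0 := hW j i habs'
    rw [hz1, hz2, zero_mul, mul_zero, sub_zero]
  set I' : Finset ℕ+ := I.filter (fun i => psum k p < (i:ℕ)) with hI'def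
  have h5 : ∑ i ∈ I, t i = ∑ i ∈ I', t i := by
    refine (Finset.sum_filter_of_ne ?_).symm
    intro i hi hne
    by_contra hc
    push_neg at hc
    exact hne (h4 i hi (by omega))
  have hcard : I'.card ≤ k (p+1) := by
    have hmap : ∀ i ∈ I', (i:ℕ) ∈ Finset.Ioc (psum k p) (psum k (p+1)) := by
      intro i hi
      rw [Finset.mem_filter] at hi
      rw [Finset.mem_Ioc]
      refine ⟨hi.2, ?_⟩
      have := (Finset.mem_Icc.mp hi.1).2
      exact_mod_cast (PNat.coe_le_coe _ _).mpr this
    calc I'.card ≤ (Finset.Ioc (psum k p) (psum k (p+1))).card := by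
          refine Finset.card_le_card_of_injOn (fun i => (i:ℕ)) hmap ?_
          intro a _ b _ hab
          exact PNat.coe_injective hab
      _ = k (p+1) := by
          rw [Nat.card_Ioc, psum_succ]
          omega
  have hterm : ∀ i ∈ I', ‖t i‖ ≤ 2 * (‖W‖ * ‖V‖) := by
    intro i _
    rw [htdef]
    simp only
    rw [Finset.sum_sub_distrib]
    calc ‖(∑ j ∈ J \ I, w i j * v j i) - ∑ j ∈ J \ I, v i j * w j i‖
        ≤ ‖∑ j ∈ J \ I, w i j * v j i‖ + ‖∑ j ∈ J \ I, v i j * w j i‖ := norm_sub_le _ _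
      _ ≤ ‖W‖ * ‖V‖ + ‖V‖ * ‖W‖ :=
          add_le_add (norm_sum_entry_mul_le e W V i _) (norm_sum_entry_mul_le e V W i _)
      _ = 2 * (‖W‖ * ‖V‖) := by ring
  calc ‖ptrace e (W ∘L V - V ∘L W) (psum k (p+1))‖
      = ‖∑ i ∈ I', t i‖ := by rw [h3, h5]
    _ ≤ ∑ i ∈ I', ‖t i‖ := norm_sum_le _ _
    _ ≤ ∑ _i ∈ I', 2 * (‖W‖ * ‖V‖) := Finset.sum_le_sum hterm
    _ = (I'.card : ℝ) * (2 * (‖W‖ * ‖V‖)) := by rw [Finset.sum_const, nsmul_eq_mul]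
    _ ≤ (k (p+1) : ℝ) * (2 * (‖W‖ * ‖V‖)) := by
        have : (0:ℝ) ≤ 2 * (‖W‖ * ‖V‖) := by positivity
        exact mul_le_mul_of_nonneg_right (by exact_mod_cast hcard) this
    _ = 2 * (k (p+1) : ℝ) * (‖W‖ * ‖V‖) := by ring

end AuxLemmas

/-- If every nonincreasing strictly positive null sequence `(d i)_{i ≥ 1}`
gives a diagonal operator `diag d` which is a commutator `CZ - ZC` with `C` compact, `Z`
bounded, and at least one of `C, Z` block tridiagonal with central block sizes `k n`, then
`k n` grows at least exponentially: `k n ≥ c * ρ^n` for some `ρ > 1`, `c > 0`. -/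
theorem exponential_block_growth_required
    (e : HilbertBasis ℕ+ ℂ H) (k : ℕ → ℕ) (hk : ∀ n, 1 ≤ n → 1 ≤ k n)
    (h : ∀ d : ℕ → ℝ, (∀ i, 1 ≤ i → 0 < d i) → (∀ i, 1 ≤ i → d (i + 1) ≤ d i) →
      Tendsto d atTop (nhds 0) →
      ∃ C Z D : H →L[ℂ] H, (∀ i : ℕ+, D (e i) = (d (i : ℕ) : ℂ) • e i) ∧
        IsCompactOperator (⇑C) ∧
        (IsBlockTridiagonal e k C ∨ IsBlockTridiagonal e k Z) ∧
        D = C ∘L Z - Z ∘L C) :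
    ∃ ρ c : ℝ, 1 < ρ ∧ 0 < c ∧ ∀ n, 1 ≤ n → c * ρ ^ n ≤ (k n : ℝ) := by
  classical
  by_cases hcase : ∃ a : ℝ, 0 < a ∧ ∀ n, 1 ≤ n → a * (psum k n : ℝ) ≤ (k n : ℝ)
  · -- the block sizes are a positive fraction of the partial sums: direct exponential growth
    obtain ⟨a, ha0, ha⟩ := hcase
    set a' : ℝ := min a (1/2) with ha'def
    have ha'0 : 0 < a' := lt_min ha0 (by norm_num)
    have ha'half : a' ≤ 1/2 := min_le_right _ _
    have ha' : ∀ n, 1 ≤ n → a' * (psum k n : ℝ) ≤ (k n : ℝ) := fun n hn =>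
      le_trans (mul_le_mul_of_nonneg_right (min_le_left _ _) (Nat.cast_nonneg _)) (ha n hn)
    have h1a : 0 < 1 - a' := by linarith
    set ρ : ℝ := (1 - a')⁻¹ with hρdef
    have hρ0 : 0 < ρ := inv_pos.mpr h1a
    have hmulρ : (1 - a') * ρ = 1 := mul_inv_cancel₀ (ne_of_gt h1a)
    have hρ1 : 1 < ρ := by nlinarith [mul_pos ha'0 hρ0]
    have claim : ∀ n, 1 ≤ n → ρ ^ (n - 1) ≤ (psum k n : ℝ) := by
      intro n hn
      induction n, hn using Nat.le_induction with
      | base =>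
        simp only [Nat.sub_self, pow_zero]
        exact_mod_cast le_psum k hk 1
      | succ n hn ih =>
        obtain ⟨q, rfl⟩ : ∃ q, n = q + 1 := ⟨n - 1, by omega⟩
        rw [show q + 1 + 1 - 1 = q + 1 from rfl]
        have hstep : (psum k (q + 1) : ℝ) ≤ (1 - a') * psum k (q + 2) := by
          have h1 : (psum k (q + 2) : ℝ) = psum k (q + 1) + k (q + 2) := by
            exact_mod_cast psum_succ k (q + 1)
          have h2 := ha' (q + 2) (by omega)
          linarith
        calc ρ ^ (q + 1) = ρ * ρ ^ (q + 1 - 1) := by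
              rw [show q + 1 - 1 = q from rfl, pow_succ]; ring
          _ ≤ ρ * (psum k (q + 1) : ℝ) := mul_le_mul_of_nonneg_left ih hρ0.le
          _ ≤ ρ * ((1 - a') * psum k (q + 2)) := mul_le_mul_of_nonneg_left hstep hρ0.le
          _ = (psum k (q + 2) : ℝ) := by
              rw [← mul_assoc, mul_comm ρ (1 - a'), hmulρ, one_mul]
    refine ⟨ρ, a' * (1 - a'), hρ1, mul_pos ha'0 h1a, ?_⟩
    intro n hn
    have h1 := ha' n hn
    have h2 := claim n hn
    have h3 : ρ ^ n = ρ ^ (n - 1) * ρ := by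
      obtain ⟨q, rfl⟩ : ∃ q, n = q + 1 := ⟨n - 1, by omega⟩
      rw [show q + 1 - 1 = q from rfl, pow_succ]
    calc a' * (1 - a') * ρ ^ n = a' * ρ ^ (n - 1) * ((1 - a') * ρ) := by rw [h3]; ring
      _ = a' * ρ ^ (n - 1) := by rw [hmulρ, mul_one]
      _ ≤ a' * (psum k n : ℝ) := mul_le_mul_of_nonneg_left h2 ha'0.le
      _ ≤ (k n : ℝ) := h1
  · -- otherwise derive a contradiction from the hypothesis `h`
    exfalso
    push_neg at hcase
    have hcase' : ∀ a : ℝ, 0 < a → ∃ n, 1 ≤ n ∧ (k n : ℝ) < a * psum k n := hcase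
    -- arbitrarily late indices with arbitrarily small density
    have key : ∀ (j N : ℕ), ∃ n, N < n ∧ 1 ≤ n ∧
        (k n : ℝ) < (4 : ℝ)⁻¹ ^ j * psum k n := by
      intro j N
      have hden : (0 : ℝ) < (psum k N : ℝ) + 1 := by positivity
      set a : ℝ := min ((4 : ℝ)⁻¹ ^ j) (1 / ((psum k N : ℝ) + 1)) with hadef
      have ha0 : 0 < a := lt_min (by positivity) (by positivity)
      obtain ⟨n, hn1, hlt⟩ := hcase' a ha0
      have hpos : (0 : ℝ) ≤ (psum k n : ℝ) := Nat.cast_nonneg _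
      refine ⟨n, ?_, hn1,
        lt_of_lt_of_le hlt (mul_le_mul_of_nonneg_right (min_le_left _ _) hpos)⟩
      by_contra hc
      push_neg at hc
      have h1 : (1 : ℝ) ≤ (k n : ℝ) := by exact_mod_cast hk n hn1
      have h2 : (psum k n : ℝ) ≤ (psum k N : ℝ) := by exact_mod_cast psum_mono k hc
      have h3 : a ≤ 1 / ((psum k N : ℝ) + 1) := min_le_right _ _
      have h5 : a * (psum k n : ℝ) ≤ (psum k N : ℝ) / ((psum k N : ℝ) + 1) := by
        calc a * (psum k n : ℝ) ≤ (1 / ((psum k N : ℝ) + 1)) * (psum k N : ℝ) :=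
              mul_le_mul h3 h2 hpos (by positivity)
          _ = (psum k N : ℝ) / ((psum k N : ℝ) + 1) := by ring
      have h6 : (psum k N : ℝ) / ((psum k N : ℝ) + 1) < 1 :=
        (div_lt_one hden).mpr (by linarith)
      linarith
    choose f hf1 hf2 hf3 using key
    -- the sparse sequence of block indices
    set nseq : ℕ → ℕ := fun j => Nat.rec 0 (fun m ih => f (m + 1) ih) j with hnseqdef
    have hnseqS : ∀ j, nseq (j + 1) = f (j + 1) (nseq j) := fun j => rfl
    have hmono : StrictMono nseq := strictMono_nat_of_lt_succ fun j => by
      rw [hnseqS j]; exact hf1 (j + 1) (nseq j)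
    have h1seq : ∀ j, 1 ≤ nseq (j + 1) := fun j => by
      rw [hnseqS j]; exact hf2 (j + 1) (nseq j)
    have hub : ∀ j, (k (nseq (j + 1)) : ℝ) < (4 : ℝ)⁻¹ ^ (j + 1) * psum k (nseq (j + 1)) :=
      fun j => by rw [hnseqS j]; exact hf3 (j + 1) (nseq j)
    have hle : ∀ j, j ≤ nseq j := by
      intro j
      induction j with
      | zero => exact Nat.zero_le _
      | succ m ih =>
        have h2 : nseq m < nseq (m + 1) := hmono m.lt_succ_self
        omega
    -- the counting function and the weight sequence
    set cnt : ℕ → ℕ := fun m => ((Finset.Icc 1 m).filter (fun j => nseq j ≤ m)).card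
      with hcntdef
    have cnt_mono : Monotone cnt := by
      intro m m' hmm'
      apply Finset.card_le_card
      intro j hj
      rw [Finset.mem_filter, Finset.mem_Icc] at hj ⊢
      exact ⟨⟨hj.1.1, le_trans hj.1.2 hmm'⟩, le_trans hj.2 hmm'⟩
    have cnt_at : ∀ J, cnt (nseq J) = J := by
      intro J
      have hset : (Finset.Icc 1 (nseq J)).filter (fun j => nseq j ≤ nseq J)
          = Finset.Icc 1 J := by
        ext j
        rw [Finset.mem_filter, Finset.mem_Icc, Finset.mem_Icc]
        constructor
        · rintro ⟨⟨hj1, _⟩, hj3⟩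
          exact ⟨hj1, hmono.le_iff_le.mp hj3⟩
        · rintro ⟨hj1, hj2⟩
          have hj3 : nseq j ≤ nseq J := hmono.monotone hj2
          exact ⟨⟨hj1, le_trans (hle j) hj3⟩, hj3⟩
      show ((Finset.Icc 1 (nseq J)).filter (fun j => nseq j ≤ nseq J)).card = J
      rw [hset, Nat.card_Icc]
      omega
    set d : ℕ → ℝ := fun i => (2 : ℝ)⁻¹ ^ (cnt (blockIdx k i)) with hddef
    have hd_pos : ∀ i : ℕ, 0 < d i := fun i => by positivity
    have hd_anti : ∀ i, 1 ≤ i → d (i + 1) ≤ d i := by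
      intro i _
      exact pow_le_pow_of_le_one (by norm_num) (by norm_num)
        (cnt_mono (blockIdx_mono k hk (Nat.le_succ i)))
    have hd_tendsto : Tendsto d atTop (nhds 0) := by
      have hcnt_top : Tendsto cnt atTop atTop :=
        tendsto_atTop_atTop_of_monotone cnt_mono
          (fun b => ⟨nseq b, le_of_eq (cnt_at b).symm⟩)
      have hcomp : Tendsto (fun i => cnt (blockIdx k i)) atTop atTop :=
        hcnt_top.comp (blockIdx_tendsto k hk)
      exact (tendsto_pow_atTop_nhds_zero_of_lt_one (by norm_num : (0:ℝ) ≤ 2⁻¹)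
        (by norm_num : (2⁻¹ : ℝ) < 1)).comp hcomp
    obtain ⟨C, Z, D, hD, _hcpt, htri, hDeq⟩ :=
      h d (fun i _ => hd_pos i) hd_anti hd_tendsto
    -- compute the partial traces of D
    have hpn : ∀ n, 1 ≤ n → 0 < psum k n := fun n hn => lt_of_lt_of_le hn (le_psum k hk n)
    have hone : ∀ i : ℕ+, (inner ℂ (e i) (e i) : ℂ) = 1 := by
      have ho := e.orthonormal
      rw [orthonormal_iff_ite] at ho
      intro i
      simpa using ho i i
    have hDtrace : ∀ n (hn : 1 ≤ n), ptrace e D (psum k n)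
        = ((∑ i ∈ Finset.Icc 1 (⟨psum k n, hpn n hn⟩ : ℕ+), d (i : ℕ) : ℝ) : ℂ) := by
      intro n hn
      calc ptrace e D (psum k n)
          = ∑ i ∈ Finset.Icc 1 (⟨psum k n, hpn n hn⟩ : ℕ+), (inner ℂ (e i) (D (e i)) : ℂ) :=
            ptrace_eq_sum e D (⟨psum k n, hpn n hn⟩ : ℕ+)
        _ = ((∑ i ∈ Finset.Icc 1 (⟨psum k n, hpn n hn⟩ : ℕ+), d (i : ℕ) : ℝ) : ℂ) := by
            push_cast
            refine Finset.sum_congr rfl fun i _ => ?_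
            rw [hD i, inner_smul_right, hone i, mul_one]
            rfl
    have hnorm : ∀ n (hn : 1 ≤ n), ‖ptrace e D (psum k n)‖
        = ∑ i ∈ Finset.Icc 1 (⟨psum k n, hpn n hn⟩ : ℕ+), d (i : ℕ) := by
      intro n hn
      rw [hDtrace n hn, Complex.norm_real]
      exact abs_of_nonneg (Finset.sum_nonneg fun i _ => (hd_pos _).le)
    have hDbound : ∀ n, 1 ≤ n →
        ‖ptrace e D (psum k n)‖ ≤ 2 * (k n : ℝ) * (‖C‖ * ‖Z‖) := by
      intro n hn
      rcases htri with hC | hZ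
      · rw [hDeq]
        exact ptrace_comm_bound e k hk C Z hC hn
      · have hop : C ∘L Z - Z ∘L C = Z ∘L (-C) - (-C) ∘L Z := by
          ext x
          simp only [ContinuousLinearMap.sub_apply, ContinuousLinearMap.comp_apply,
            ContinuousLinearMap.neg_apply, map_neg]
          abel
        rw [hDeq, hop]
        have hb := ptrace_comm_bound e k hk Z (-C) hZ hn
        rw [norm_neg] at hb
        calc ‖ptrace e (Z ∘L (-C) - (-C) ∘L Z) (psum k n)‖
            ≤ 2 * (k n : ℝ) * (‖Z‖ * ‖C‖) := hb
          _ = 2 * (k n : ℝ) * (‖C‖ * ‖Z‖) := by ring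
    have sumbound : ∀ n (hn : 1 ≤ n),
        ∑ i ∈ Finset.Icc 1 (⟨psum k n, hpn n hn⟩ : ℕ+), d (i : ℕ)
          ≤ 2 * (k n : ℝ) * (‖C‖ * ‖Z‖) := by
      intro n hn
      rw [← hnorm n hn]
      exact hDbound n hn
    have hlow : ∀ n (hn : 1 ≤ n), (2 : ℝ)⁻¹ ^ (cnt n) * (psum k n : ℝ)
        ≤ ∑ i ∈ Finset.Icc 1 (⟨psum k n, hpn n hn⟩ : ℕ+), d (i : ℕ) := by
      intro n hn
      have hterm : ∀ i ∈ Finset.Icc 1 (⟨psum k n, hpn n hn⟩ : ℕ+),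
          (2 : ℝ)⁻¹ ^ (cnt n) ≤ d (i : ℕ) := by
        intro i hi
        have hbi : blockIdx k (i : ℕ) ≤ n := (blockIdx_le_iff k hk _ _).mpr
          ((PNat.coe_le_coe _ _).mpr (Finset.mem_Icc.mp hi).2)
        exact pow_le_pow_of_le_one (by norm_num) (by norm_num) (cnt_mono hbi)
      have hcard : (Finset.Icc 1 (⟨psum k n, hpn n hn⟩ : ℕ+)).card = psum k n := by
        erw [PNat.card_Icc]
        simp
        rfl
      calc (2 : ℝ)⁻¹ ^ (cnt n) * (psum k n : ℝ)
          = (Finset.Icc 1 (⟨psum k n, hpn n hn⟩ : ℕ+)).card • ((2 : ℝ)⁻¹ ^ (cnt n)) := by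
            rw [hcard, nsmul_eq_mul, mul_comm]
        _ = ∑ _i ∈ Finset.Icc 1 (⟨psum k n, hpn n hn⟩ : ℕ+), (2 : ℝ)⁻¹ ^ (cnt n) := by
            rw [Finset.sum_const]
        _ ≤ ∑ i ∈ Finset.Icc 1 (⟨psum k n, hpn n hn⟩ : ℕ+), d (i : ℕ) :=
            Finset.sum_le_sum hterm
    -- the contradiction
    obtain ⟨j0, hj0⟩ := pow_unbounded_of_one_lt (2 * (‖C‖ * ‖Z‖)) (by norm_num : (1:ℝ) < 2)
    set n := nseq (j0 + 1) with hndef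
    have hn1 : 1 ≤ n := h1seq j0
    have hs0 : (0 : ℝ) < (psum k n : ℝ) := by exact_mod_cast hpn n hn1
    set x : ℝ := (2 : ℝ)⁻¹ ^ (j0 + 1) with hxdef
    have hx : 0 < x := by positivity
    have hA : x * (psum k n : ℝ) ≤ 2 * (k n : ℝ) * (‖C‖ * ‖Z‖) := by
      have h1 := hlow n hn1
      have h2 := sumbound n hn1
      have hcnt : cnt n = j0 + 1 := by rw [hndef]; exact cnt_at (j0 + 1)
      rw [hcnt] at h1
      exact le_trans h1 h2
    have hB : (k n : ℝ) < x ^ 2 * (psum k n : ℝ) := by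
      have h4 : ((4 : ℝ)⁻¹) ^ (j0 + 1) = x ^ 2 := by
        rw [hxdef, show ((4 : ℝ))⁻¹ = 2⁻¹ * 2⁻¹ by norm_num, mul_pow, sq]
      have := hub j0
      rw [h4] at this
      exact this
    have hM : (0 : ℝ) ≤ ‖C‖ * ‖Z‖ := by positivity
    have e1 : 2 * (k n : ℝ) * (‖C‖ * ‖Z‖) ≤ 2 * (x ^ 2 * (psum k n : ℝ)) * (‖C‖ * ‖Z‖) := by
      have hkk : (2 : ℝ) * (k n : ℝ) ≤ 2 * (x ^ 2 * (psum k n : ℝ)) := by linarith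
      exact mul_le_mul_of_nonneg_right hkk hM
    have e2 : x * (psum k n : ℝ) ≤ (2 * (‖C‖ * ‖Z‖) * x) * (x * (psum k n : ℝ)) := by
      calc x * (psum k n : ℝ) ≤ 2 * (x ^ 2 * (psum k n : ℝ)) * (‖C‖ * ‖Z‖) := hA.trans e1
        _ = (2 * (‖C‖ * ‖Z‖) * x) * (x * (psum k n : ℝ)) := by ring
    have e4 : (2 : ℝ) ^ j0 * x = 2⁻¹ := by
      rw [hxdef, inv_pow, pow_succ, mul_inv, ← mul_assoc,
        mul_inv_cancel₀ (pow_ne_zero _ (two_ne_zero)), one_mul]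
    have e3 : 2 * (‖C‖ * ‖Z‖) * x < 2⁻¹ := by
      calc 2 * (‖C‖ * ‖Z‖) * x < (2 : ℝ) ^ j0 * x := mul_lt_mul_of_pos_right hj0 hx
        _ = 2⁻¹ := e4
    have e5 : (2 * (‖C‖ * ‖Z‖) * x) * (x * (psum k n : ℝ))
        < 2⁻¹ * (x * (psum k n : ℝ)) :=
      mul_lt_mul_of_pos_right e3 (by positivity)
    have hxs : 0 < x * (psum k n : ℝ) := by positivity
    linarith
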